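/- For ADAPD iterates with initialization consistency, for all k ≥ 0: (1/(2η))(‖√(I−W)X0^{k+1}‖_F² + ‖√(I−W)(X0^{k+1}−X0^k)‖_F² − ‖√(I−W)X0^k‖_F²) + (1/(2η))(‖V0^k‖_W² + ‖X0^{k+1}−X0^k‖_W² − ‖X0^k−X0^{k-1}‖_W²) ≤ (L − 1/(2η))‖X0^{k+1}−X0^k‖_F² + (L/2)‖X^{k+1}−X^k‖_F² + (1/(2η))‖X0^k−X0^{k-1}‖_F² − (1/(2η))‖V0^k‖_F² + (2/L)ε_k. -/

import Mathlib

open Matrix Finset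

attribute [local instance] Matrix.frobeniusNormedAddCommGroup Matrix.frobeniusNormedSpace

noncomputable section

variable {N p : ℕ}

/-- Frobenius inner product on `N × p` real matrices. -/
def frobInner (A B : Matrix (Fin N) (Fin p) ℝ) : ℝ := ∑ i, ∑ j, A i j * B i j

/-- Squared Frobenius norm. -/
def frobSq (A : Matrix (Fin N) (Fin p) ℝ) : ℝ := frobInner A A

/-- Frobenius norm. -/
def frobNorm (A : Matrix (Fin N) (Fin p) ℝ) : ℝ := Real.sqrt (frobInner A A)

/-- The continuous linear functional `H ↦ ⟨G, H⟩_F`. -/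
def frobCLM (G : Matrix (Fin N) (Fin p) ℝ) : Matrix (Fin N) (Fin p) ℝ →L[ℝ] ℝ :=
  LinearMap.toContinuousLinearMap
    { toFun := fun H => frobInner G H
      map_add' := by
        intro x y
        simp [frobInner, Matrix.add_apply, mul_add, Finset.sum_add_distrib]
      map_smul' := by
        intro c x
        simp [frobInner, Matrix.smul_apply, Finset.mul_sum]
        ring_nf
        apply Finset.sum_congr rfl; intro i _
        apply Finset.sum_congr rfl; intro j _; ring }

/-- Spectral norm (operator 2-norm) of a square real matrix. -/
def specNorm {N : ℕ} (M : Matrix (Fin N) (Fin N) ℝ) : ℝ :=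
  ‖Matrix.toEuclideanCLM (𝕜 := ℝ) M‖

/-- The all-ones `N × N` matrix. -/
def onesMat (N : ℕ) : Matrix (Fin N) (Fin N) ℝ := fun _ _ => 1

/-- Quadratic form `‖A‖_M² := ⟨A, M A⟩_F` for a symmetric `M` (possibly negative). -/
def quadForm (M : Matrix (Fin N) (Fin N) ℝ) (A : Matrix (Fin N) (Fin p) ℝ) : ℝ :=
  frobInner A (M * A)

/-- Augmented Lagrangian `L_η(X, X0; Y, Z)`, where `S` plays the role of `√(I−W)`. -/
def Lag (F : Matrix (Fin N) (Fin p) ℝ → ℝ) (S : Matrix (Fin N) (Fin N) ℝ) (η : ℝ)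
    (X X0 Y Z : Matrix (Fin N) (Fin p) ℝ) : ℝ :=
  F X + frobInner Y (X - X0) + (2*η)⁻¹ * frobSq (X - X0)
    + frobInner Z (S * X0) + (2*η)⁻¹ * frobSq (S * X0)

section AdapdAux
variable {N p : ℕ}

lemma fi_comm (A B : Matrix (Fin N) (Fin p) ℝ) : frobInner A B = frobInner B A := by
  simp [frobInner, mul_comm]

lemma fi_add_left (A B C : Matrix (Fin N) (Fin p) ℝ) :
    frobInner (A + B) C = frobInner A C + frobInner B C := by
  simp [frobInner, Matrix.add_apply, add_mul, Finset.sum_add_distrib]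

lemma fi_sub_left (A B C : Matrix (Fin N) (Fin p) ℝ) :
    frobInner (A - B) C = frobInner A C - frobInner B C := by
  simp [frobInner, Matrix.sub_apply, sub_mul, Finset.sum_sub_distrib]

lemma fi_add_right (A B C : Matrix (Fin N) (Fin p) ℝ) :
    frobInner A (B + C) = frobInner A B + frobInner A C := by
  simp [frobInner, Matrix.add_apply, mul_add, Finset.sum_add_distrib]

lemma fi_sub_right (A B C : Matrix (Fin N) (Fin p) ℝ) :
    frobInner A (B - C) = frobInner A B - frobInner A C := by
  simp [frobInner, Matrix.sub_apply, mul_sub, Finset.sum_sub_distrib]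

lemma fi_smul_left (c : ℝ) (A B : Matrix (Fin N) (Fin p) ℝ) :
    frobInner (c • A) B = c * frobInner A B := by
  simp [frobInner, Matrix.smul_apply, smul_eq_mul, Finset.mul_sum, mul_assoc]

lemma fi_smul_right (c : ℝ) (A B : Matrix (Fin N) (Fin p) ℝ) :
    frobInner A (c • B) = c * frobInner A B := by
  rw [fi_comm, fi_smul_left, fi_comm]

lemma fi_mul_left (M : Matrix (Fin N) (Fin N) ℝ) (A B : Matrix (Fin N) (Fin p) ℝ) :
    frobInner (M * A) B = frobInner A (Mᵀ * B) := by
  simp only [frobInner, Matrix.mul_apply, Matrix.transpose_apply, Finset.sum_mul, Finset.mul_sum]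
  conv_lhs => enter [2, i]; rw [Finset.sum_comm]
  conv_lhs => rw [Finset.sum_comm]
  refine Finset.sum_congr rfl fun l _ => ?_
  conv_lhs => rw [Finset.sum_comm]
  exact Finset.sum_congr rfl fun j _ => Finset.sum_congr rfl fun i _ => by ring

lemma fsq_def (A : Matrix (Fin N) (Fin p) ℝ) : frobSq A = frobInner A A := rfl

lemma fsq_nonneg (A : Matrix (Fin N) (Fin p) ℝ) : 0 ≤ frobSq A := by
  unfold frobSq frobInner
  apply Finset.sum_nonneg; intro i _
  apply Finset.sum_nonneg; intro j _
  exact mul_self_nonneg _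

lemma fsq_sub (A B : Matrix (Fin N) (Fin p) ℝ) :
    frobSq (A - B) = frobSq A - 2 * frobInner A B + frobSq B := by
  simp only [frobSq, fi_sub_left, fi_sub_right]
  rw [fi_comm B A]; ring

lemma fsq_add (A B : Matrix (Fin N) (Fin p) ℝ) :
    frobSq (A + B) = frobSq A + 2 * frobInner A B + frobSq B := by
  simp only [frobSq, fi_add_left, fi_add_right]
  rw [fi_comm B A]; ring

lemma fsq_smul (c : ℝ) (A : Matrix (Fin N) (Fin p) ℝ) :
    frobSq (c • A) = c^2 * frobSq A := by
  simp only [frobSq, fi_smul_left, fi_smul_right]; ring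

lemma fnormsq (A : Matrix (Fin N) (Fin p) ℝ) : frobNorm A ^ 2 = frobSq A :=
  Real.sq_sqrt (fsq_nonneg A)

lemma fnorm_nonneg (A : Matrix (Fin N) (Fin p) ℝ) : 0 ≤ frobNorm A :=
  Real.sqrt_nonneg _

end AdapdAux

set_option maxHeartbeats 2000000 in
/-- Lemma: supporting inequality for ADAPD.
`‖·‖_W²` is the (possibly indefinite) quadratic form `quadForm W`, and
`V0^k = (X0^{k+1} − X0^k) − (X0^k − X0^{k-1})` with `X0^{-1} = X0^0`. -/
theorem adapd_supporting_inequality (N p : ℕ) (hN : 0 < N) (hp : 0 < p)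
    -- mixing matrix assumptions
    (W : Matrix (Fin N) (Fin N) ℝ) (hWsym : Wᵀ = W)
    (hWub : Matrix.PosSemidef (1 - W)) (hWlb : Matrix.PosDef (1 + W))
    (hWnull : ∀ v : Fin N → ℝ, (1 - W).mulVec v = 0 ↔ ∃ c : ℝ, v = fun _ => c)
    (ρ : ℝ) (hρdef : ρ = specNorm (W - (N:ℝ)⁻¹ • onesMat N)) (hρlt : ρ < 1)
    -- `S` is the unique positive semidefinite square root of `I − W`
    (S : Matrix (Fin N) (Fin N) ℝ) (hSpsd : S.PosSemidef) (hSsq : S * S = 1 - W)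
    -- objective: `F` is `L`-smooth (gradient `G` w.r.t. the Frobenius inner product)
    -- and bounded below by `flb`
    (L flb : ℝ) (hL : 0 < L)
    (F : Matrix (Fin N) (Fin p) ℝ → ℝ)
    (G : Matrix (Fin N) (Fin p) ℝ → Matrix (Fin N) (Fin p) ℝ)
    (hgrad : ∀ U, HasFDerivAt F (frobCLM (G U)) U)
    (hLip : ∀ U V, frobNorm (G U - G V) ≤ L * frobNorm (U - V))
    (hlb : ∀ U, flb ≤ F U)
    -- ADAPD iterates with parameter `η` and error tolerances `ε`
    (η : ℝ) (hη : 0 < η)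
    (ε : ℕ → ℝ) (hεpos : ∀ k, 0 < ε (k+1)) (hεmono : ∀ k, ε (k+2) ≤ ε (k+1))
    (X X0 Y Z : ℕ → Matrix (Fin N) (Fin p) ℝ)
    (hZ0 : ∃ U0 : Matrix (Fin N) (Fin p) ℝ, Z 0 = S * U0)
    (hres : ∀ k, frobSq (G (X (k+1)) + Y k + η⁻¹ • (X (k+1) - X0 k)) ≤ ε (k+1))
    (hX0it : ∀ k, X0 (k+1) = (2:ℝ)⁻¹ • (W * X0 k + X (k+1) + η • (Y k - S * Z k)))
    (hYit : ∀ k, Y (k+1) = Y k + η⁻¹ • (X (k+1) - X0 (k+1)))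
    (hZit : ∀ k, Z (k+1) = Z k + η⁻¹ • (S * X0 (k+1)))
    -- initialization consistency (with `ε 0 := ε 1`)
    (hε0 : ε 0 = ε 1)
    (hZY0 : S * Z 0 = Y 0)
    (hY0R : ∃ R0 : Matrix (Fin N) (Fin p) ℝ, Y 0 = R0 - G (X 0) ∧ frobSq R0 ≤ ε 0)
    :
    ∀ k : ℕ,
      (2*η)⁻¹ * (frobSq (S * X0 (k+1)) + frobSq (S * (X0 (k+1) - X0 k))
          - frobSq (S * X0 k))
      + (2*η)⁻¹ * (quadForm W ((X0 (k+1) - X0 k) - (X0 k - X0 (k-1)))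
          + quadForm W (X0 (k+1) - X0 k) - quadForm W (X0 k - X0 (k-1)))
        ≤ (L - (2*η)⁻¹) * frobSq (X0 (k+1) - X0 k) + L/2 * frobSq (X (k+1) - X k)
          + (2*η)⁻¹ * frobSq (X0 k - X0 (k-1))
          - (2*η)⁻¹ * frobSq ((X0 (k+1) - X0 k) - (X0 k - X0 (k-1)))
          + 2/L * ε k := by
  have hηne : η ≠ 0 := ne_of_gt hη
  have hηη : ∀ M : Matrix (Fin N) (Fin p) ℝ, η • η⁻¹ • M = M := fun M => by
    rw [smul_smul, mul_inv_cancel₀ hηne, one_smul]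
  have hST : Sᵀ = S := by
    have h := hSpsd.1
    exact Matrix.IsSymm.eq (by simpa using h)
  obtain ⟨R0, hR0Y, hR0sq⟩ := hY0R
  have claimW : ∀ k, η • Y k - η • (S * Z k) = W * (X0 k - X0 (k-1)) := by
    intro k
    cases k with
    | zero => simp [hZY0]
    | succ k =>
      simp only [Nat.add_sub_cancel]
      have h3 : η • Y k - η • (S * Z k) = (2:ℝ) • X0 (k+1) - W * X0 k - X (k+1) := by
        rw [hX0it k, smul_smul]
        norm_num
        rw [smul_sub]; abel
      calc η • Y (k+1) - η • (S * Z (k+1))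
          = (η • Y k - η • (S * Z k)) + (X (k+1) - X0 (k+1)) - (X0 (k+1) - W * X0 (k+1)) := by
            rw [hYit k, hZit k, Matrix.mul_add, Matrix.mul_smul, ← Matrix.mul_assoc, hSsq,
              Matrix.sub_mul, Matrix.one_mul, smul_add, smul_add, hηη, hηη]
            abel
        _ = ((2:ℝ) • X0 (k+1) - W * X0 k - X (k+1)) + (X (k+1) - X0 (k+1))
              - (X0 (k+1) - W * X0 (k+1)) := by rw [h3]
        _ = W * (X0 (k+1) - X0 k) := by rw [Matrix.mul_sub]; module
  have claimGR : ∀ k, ∃ Rk, frobSq Rk ≤ ε k ∧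
      G (X k) = Rk - Y k - η⁻¹ • (X0 k - X0 (k-1)) := by
    intro k
    cases k with
    | zero =>
      refine ⟨R0, hR0sq, ?_⟩
      simp only [Nat.zero_sub, sub_self, smul_zero, sub_zero]
      rw [hR0Y]; abel
    | succ k =>
      refine ⟨G (X (k+1)) + Y k + η⁻¹ • (X (k+1) - X0 k), hres k, ?_⟩
      simp only [Nat.add_sub_cancel]
      rw [hYit k]
      module
  intro k
  obtain ⟨Ra, hRa, hGa⟩ := claimGR k
  obtain ⟨Rb, hRb, hGb⟩ := claimGR (k+1)
  simp only [Nat.add_sub_cancel] at hGb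
  have cW0 := claimW k
  have cW1 := claimW (k+1)
  simp only [Nat.add_sub_cancel] at cW1
  have hεk : ε (k+1) ≤ ε k := by
    cases k with
    | zero => rw [hε0]
    | succ j => exact hεmono j
  have hRb' : frobSq Rb ≤ ε k := le_trans hRb hεk
  set X0' := X0 (k+1) with hX0'
  set X0k := X0 k with hX0k
  set X0m := X0 (k-1) with hX0m
  set D := X0' - X0k with hD
  set Dm := X0k - X0m with hDm
  have hSZ : η • (S * Z (k+1)) = η • (S * Z k) + (X0' - W * X0') := by
    rw [hZit k, Matrix.mul_add, Matrix.mul_smul, ← Matrix.mul_assoc, hSsq,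
      Matrix.sub_mul, Matrix.one_mul, smul_add, hηη]
  have cW1' : η • Y (k+1) = η • (S * Z (k+1)) + W * D := by rw [← cW1]; abel
  have cW0' : η • Y k = η • (S * Z k) + W * Dm := by rw [← cW0]; abel
  have e1 : η • (G (X (k+1)) - G (X k))
      = η • Rb - η • Ra - (X0' - W * X0') - (W * D - W * Dm) - (D - Dm) := by
    rw [smul_sub, hGb, hGa]
    simp only [smul_sub]
    rw [hηη, hηη, cW1', hSZ, cW0']
    abel
  have hS := congrArg (fun M => frobInner M D) e1
  simp only [fi_sub_left, fi_smul_left] at hS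
  have hSS : ∀ A B : Matrix (Fin N) (Fin p) ℝ,
      frobInner (S * A) (S * B) = frobInner A B - frobInner A (W * B) := by
    intro A B
    rw [fi_mul_left, hST, ← Matrix.mul_assoc, hSsq, Matrix.sub_mul, Matrix.one_mul, fi_sub_right]
  have hWD : W * D = W * X0' - W * X0k := by rw [hD, Matrix.mul_sub]
  have hWDm : W * Dm = W * X0k - W * X0m := by rw [hDm, Matrix.mul_sub]
  have s1 : 2 * (frobInner X0' D - frobInner (W * X0') D)
      = frobSq (S * X0') + frobSq (S * D) - frobSq (S * X0k) := by
    have h1 : frobSq (S * X0') = frobInner X0' X0' - frobInner X0' (W * X0') := by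
      rw [fsq_def]; exact hSS X0' X0'
    have h2 : frobSq (S * X0k) = frobInner X0k X0k - frobInner X0k (W * X0k) := by
      rw [fsq_def]; exact hSS X0k X0k
    have h3 : frobSq (S * D) = frobSq (S * X0') - 2 * frobInner (S * X0') (S * X0k)
        + frobSq (S * X0k) := by
      rw [hD, Matrix.mul_sub, fsq_sub]
    have h4 : frobInner (S * X0') (S * X0k) = frobInner X0' X0k - frobInner X0' (W * X0k) :=
      hSS _ _
    have h5 : frobInner X0' D = frobInner X0' X0' - frobInner X0' X0k := by
      rw [hD, fi_sub_right]
    have h6 : frobInner (W * X0') D = frobInner X0' (W * X0') - frobInner X0' (W * X0k) := by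
      rw [fi_mul_left, hWsym, hWD, fi_sub_right]
    linarith [h1, h2, h3, h4, h5, h6]
  have s2 : quadForm W (D - Dm) + quadForm W D - quadForm W Dm
      = 2 * (frobInner (W * D) D - frobInner (W * Dm) D) := by
    have hqV : quadForm W (D - Dm) = frobInner D (W * D) - frobInner D (W * Dm)
        - (frobInner Dm (W * D) - frobInner Dm (W * Dm)) := by
      rw [quadForm, Matrix.mul_sub, fi_sub_left, fi_sub_right, fi_sub_right]
    have hsym : frobInner Dm (W * D) = frobInner D (W * Dm) := by
      rw [fi_comm, fi_mul_left, hWsym]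
    have h7 : frobInner (W * D) D = frobInner D (W * D) := fi_comm _ _
    have h8 : frobInner (W * Dm) D = frobInner D (W * Dm) := fi_comm _ _
    simp only [quadForm] at *
    linarith [hqV, hsym, h7, h8]
  have s3 : frobSq (D - Dm) + frobSq D - frobSq Dm
      = 2 * (frobInner D D - frobInner Dm D) := by
    have h9 := fsq_sub D Dm
    have h10 := fi_comm D Dm
    have h11 := fsq_def D
    linarith [h9, h10, h11]
  have hG2 : frobSq (G (X (k+1)) - G (X k)) ≤ L^2 * frobSq (X (k+1) - X k) := by
    have h := hLip (X (k+1)) (X k)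
    have h1 := fnorm_nonneg (G (X (k+1)) - G (X k))
    have h2 := fnorm_nonneg (X (k+1) - X k)
    calc frobSq (G (X (k+1)) - G (X k)) = frobNorm (G (X (k+1)) - G (X k)) ^ 2 :=
          (fnormsq _).symm
      _ ≤ (L * frobNorm (X (k+1) - X k)) ^ 2 := by
          apply pow_le_pow_left₀ h1 h
      _ = L^2 * frobNorm (X (k+1) - X k) ^ 2 := by ring
      _ = L^2 * frobSq (X (k+1) - X k) := by rw [fnormsq]
  have young1 : 0 ≤ frobSq (G (X (k+1)) - G (X k))
      + 2 * (L * (frobInner (G (X (k+1))) D - frobInner (G (X k)) D)) + L^2 * frobSq D := by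
    have h := fsq_nonneg (G (X (k+1)) - G (X k) + L • D)
    rw [fsq_add, fi_smul_right, fi_sub_left, fsq_smul] at h
    linarith [h]
  have young2 : 0 ≤ frobSq (Rb - Ra)
      - 2 * (L * (frobInner Rb D - frobInner Ra D)) + L^2 * frobSq D := by
    have h := fsq_nonneg (Rb - Ra - L • D)
    rw [fsq_sub, fi_smul_right, fi_sub_left, fsq_smul] at h
    linarith [h]
  have hΔR : frobSq (Rb - Ra) ≤ 4 * ε k := by
    have h1 := fsq_nonneg (Rb + Ra)
    rw [fsq_add] at h1
    have h2 := fsq_sub Rb Ra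
    linarith [hRa, hRb']
  have key : (frobInner Rb D - frobInner Ra D)
      - (frobInner (G (X (k+1))) D - frobInner (G (X k)) D)
      ≤ L * frobSq D + L/2 * frobSq (X (k+1) - X k) + 2/L * ε k := by
    rw [show L * frobSq D + L/2 * frobSq (X (k+1) - X k) + 2/L * ε k
        = (2*L*(L * frobSq D) + L*(L * frobSq (X (k+1) - X k)) + 4 * ε k) / (2*L) by
      field_simp; ring]
    rw [le_div_iff₀ (by positivity)]
    linarith [young1, young2, hG2, hΔR]
  set t := (2*η)⁻¹ with ht
  have h1t : t * (2*η) = 1 := inv_mul_cancel₀ (by positivity)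
  have heq : t * (frobSq (S * X0') + frobSq (S * D) - frobSq (S * X0k))
      + t * (quadForm W (D - Dm) + quadForm W D - quadForm W Dm)
      = (frobInner Rb D - frobInner Ra D)
        - (frobInner (G (X (k+1))) D - frobInner (G (X k)) D)
        - t * (frobSq (D - Dm) + frobSq D - frobSq Dm) := by
    linear_combination (-t) * s1 + t * s2 + t * s3 + (2*t) * hS
      + ((frobInner Rb D - frobInner Ra D)
        - (frobInner (G (X (k+1))) D - frobInner (G (X k)) D)) * h1t
  linarith [heq, key]

end
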